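/- Riesz composition formula: let d ≥ 1 and let a, b > 0 satisfy a + b < d. Then there exists a constant c = c(a,b,d) > 0 such that for all x, y ∈ ℝ^d, ∫_{ℝ^d} |x - z|^(a-d) |z - y|^(b-d) dz = c |x - y|^(a+b-d). -/

import Mathlib

open MeasureTheory Real Set Filter
open scoped ENNReal

lemma riesz_meas' {d : ℕ} (p : ℝ) :
    Measurable (fun z : EuclideanSpace ℝ (Fin d) ↦ ‖z‖ ^ p) := by fun_prop

-- layer cake bound common part
lemma riesz_subset {d : ℕ} {r t : ℝ} (h2 : r < 0) (ht : 0 < t) :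
    {a : EuclideanSpace ℝ (Fin d) | t ≤ ‖a‖ ^ r} ⊆ Metric.closedBall 0 (t ^ r⁻¹) := by
  intro a haa
  simp only [mem_setOf_eq] at haa
  have ha0 : a ≠ 0 := by
    rintro rfl
    rw [norm_zero, Real.zero_rpow h2.ne] at haa
    linarith
  have hna : 0 < ‖a‖ := norm_pos_iff.2 ha0
  rw [Metric.mem_closedBall, dist_zero_right]
  exact (Real.le_rpow_inv_iff_of_neg hna ht h2).2 haa

lemma riesz_L1 {d : ℕ} (hd : 1 ≤ d) {r : ℝ} (h1 : -(d : ℝ) < r) (h2 : r < 0) :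
    IntegrableOn (fun x : EuclideanSpace ℝ (Fin d) ↦ ‖x‖ ^ r) (Metric.ball 0 1) := by
  have hmeas := riesz_meas' (d := d) r
  have hnn : ∀ x : EuclideanSpace ℝ (Fin d), 0 ≤ ‖x‖ ^ r :=
    fun x ↦ rpow_nonneg (norm_nonneg _) _
  refine ⟨hmeas.aestronglyMeasurable.restrict, ?_⟩
  rw [HasFiniteIntegral, lintegral_enorm_of_nonneg fun x ↦ hnn x]
  set μ' := (volume : Measure (EuclideanSpace ℝ (Fin d))).restrict (Metric.ball 0 1) with hμ'
  rw [lintegral_eq_lintegral_meas_le μ' (Eventually.of_forall hnn) hmeas.aemeasurable]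
  set B := volume (Metric.ball (0 : EuclideanSpace ℝ (Fin d)) 1) with hB
  have hBlt : B < ∞ := measure_ball_lt_top
  have hp : r⁻¹ * d < -1 := by
    rw [inv_mul_eq_div, div_lt_iff_of_neg h2]
    linarith
  calc
    ∫⁻ t in Ioi 0, μ' {a | t ≤ ‖a‖ ^ r}
        ≤ ∫⁻ t in Ioc 0 1 ∪ Ioi 1, μ' {a | t ≤ ‖a‖ ^ r} :=
      lintegral_mono_set Ioi_subset_Ioc_union_Ioi
    _ ≤ (∫⁻ t in Ioc 0 1, μ' {a | t ≤ ‖a‖ ^ r}) + ∫⁻ t in Ioi 1, μ' {a | t ≤ ‖a‖ ^ r} :=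
      lintegral_union_le _ _ _
    _ < ∞ := ENNReal.add_lt_top.2 ⟨?_, ?_⟩
  · calc
      ∫⁻ t in Ioc 0 1, μ' {a | t ≤ ‖a‖ ^ r} ≤ ∫⁻ _t in Ioc (0:ℝ) 1, B := by
        refine lintegral_mono fun t ↦ ?_
        calc μ' {a | t ≤ ‖a‖ ^ r} ≤ μ' univ := measure_mono (subset_univ _)
        _ = B := by rw [hμ', Measure.restrict_apply_univ]
      _ = B * volume (Ioc (0:ℝ) 1) := by rw [setLIntegral_const]
      _ < ∞ := by
        apply ENNReal.mul_lt_top hBlt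
        simp [Real.volume_Ioc]
  · have key : ∀ t ∈ Ioi (1 : ℝ), μ' {a | t ≤ ‖a‖ ^ r}
        ≤ ENNReal.ofReal (t ^ (r⁻¹ * d)) * B := by
      intro t ht
      have ht0 : (0 : ℝ) < t := lt_trans one_pos ht
      have hSm : MeasurableSet {a : EuclideanSpace ℝ (Fin d) | t ≤ ‖a‖ ^ r} :=
        hmeas measurableSet_Ici
      calc μ' {a | t ≤ ‖a‖ ^ r}
          = volume ({a : EuclideanSpace ℝ (Fin d) | t ≤ ‖a‖ ^ r} ∩ Metric.ball 0 1) := by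
            rw [hμ', Measure.restrict_apply hSm]
        _ ≤ volume (Metric.closedBall (0 : EuclideanSpace ℝ (Fin d)) (t ^ r⁻¹)) :=
            measure_mono (inter_subset_left.trans (riesz_subset h2 ht0))
        _ = ENNReal.ofReal (t ^ (r⁻¹ * d)) * B := by
            rw [Measure.addHaar_closedBall _ _ (rpow_nonneg ht0.le _), hB]
            congr 2
            rw [← Real.rpow_natCast (t ^ r⁻¹), ← Real.rpow_mul ht0.le,
              finrank_euclideanSpace_fin]
    calc
      ∫⁻ t in Ioi 1, μ' {a | t ≤ ‖a‖ ^ r}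
          ≤ ∫⁻ t in Ioi 1, ENNReal.ofReal (t ^ (r⁻¹ * d)) * B :=
        setLIntegral_mono (by fun_prop) key
      _ = (∫⁻ t in Ioi 1, ENNReal.ofReal (t ^ (r⁻¹ * d))) * B :=
        lintegral_mul_const' _ _ hBlt.ne
      _ < ∞ := by
        apply ENNReal.mul_lt_top _ hBlt
        have hint := integrableOn_Ioi_rpow_of_lt hp one_pos
        have := hint.2
        rw [HasFiniteIntegral] at this
        refine lt_of_le_of_lt (lintegral_mono fun t ↦ ?_) this
        exact Real.ofReal_le_enorm _

lemma riesz_L2 {d : ℕ} {r : ℝ} (h : r < -(d : ℝ)) {ε : ℝ} (hε : 0 < ε) :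
    IntegrableOn (fun x : EuclideanSpace ℝ (Fin d) ↦ ‖x‖ ^ r)
      (Metric.ball 0 ε)ᶜ := by
  have h' : (Module.finrank ℝ (EuclideanSpace ℝ (Fin d)) : ℝ) < -r := by
    rw [finrank_euclideanSpace_fin]; linarith
  have hint : Integrable
      (fun x : EuclideanSpace ℝ (Fin d) ↦ (ε / (1 + ε)) ^ r * (1 + ‖x‖) ^ (-(-r))) :=
    (integrable_one_add_norm h').const_mul _
  refine (hint.integrableOn).mono' (riesz_meas' r).aestronglyMeasurable.restrict ?_
  rw [ae_restrict_iff' (Metric.isOpen_ball.measurableSet).compl]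
  refine Eventually.of_forall fun x hx ↦ ?_
  have hx' : ε ≤ ‖x‖ := by
    simpa [Metric.mem_ball, dist_zero_right] using hx
  have hx0 : 0 < ‖x‖ := lt_of_lt_of_le hε hx'
  have hbase : 0 < ε / (1 + ε) * (1 + ‖x‖) := by positivity
  have hle : ε / (1 + ε) * (1 + ‖x‖) ≤ ‖x‖ := by
    rw [div_mul_eq_mul_div, div_le_iff₀ (by positivity)]
    nlinarith
  rw [Real.norm_eq_abs, abs_of_nonneg (rpow_nonneg (norm_nonneg _) _), neg_neg]
  calc ‖x‖ ^ r ≤ (ε / (1 + ε) * (1 + ‖x‖)) ^ r :=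
        Real.rpow_le_rpow_of_nonpos hbase hle (by have := d.cast_nonneg (α := ℝ); linarith)
    _ = (ε / (1 + ε)) ^ r * (1 + ‖x‖) ^ r := Real.mul_rpow (by positivity) (by positivity)

lemma riesz_subset' {d : ℕ} {r t : ℝ} (h2 : r < 0) (ht : 1 < t) :
    Metric.closedBall (0 : EuclideanSpace ℝ (Fin d)) (t ^ r⁻¹) \ {0}
      ⊆ {a : EuclideanSpace ℝ (Fin d) | t ≤ ‖a‖ ^ r} ∩ Metric.ball 0 1 := by
  intro a ⟨ha1, ha2⟩
  have ht0 : (0:ℝ) < t := lt_trans one_pos ht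
  have hna : 0 < ‖a‖ := norm_pos_iff.2 (by simpa using ha2)
  rw [Metric.mem_closedBall, dist_zero_right] at ha1
  have htr : t ^ r⁻¹ < 1 :=
    Real.rpow_lt_one_of_one_lt_of_neg ht (by simpa using inv_lt_zero.mpr h2)
  constructor
  · exact (Real.le_rpow_inv_iff_of_neg hna ht0 h2).1 ha1
  · rw [Metric.mem_ball, dist_zero_right]; linarith

lemma riesz_L3 {d : ℕ} (hd : 1 ≤ d) {r : ℝ} (h : r ≤ -(d : ℝ)) :
    ¬ IntegrableOn (fun x : EuclideanSpace ℝ (Fin d) ↦ ‖x‖ ^ r) (Metric.ball 0 1) := by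
  haveI : Nontrivial (EuclideanSpace ℝ (Fin d)) := by
    refine nontrivial_of_ne (EuclideanSpace.single (⟨0, hd⟩ : Fin d) (1:ℝ)) 0 ?_
    intro hc
    have := congrArg norm hc
    rw [EuclideanSpace.norm_single, norm_zero] at this
    norm_num at this
  have hmeas := riesz_meas' (d := d) r
  have h2 : r < 0 := lt_of_le_of_lt h (by have : (0:ℝ) < d := by exact_mod_cast hd
                                          linarith)
  have hnn : ∀ x : EuclideanSpace ℝ (Fin d), 0 ≤ ‖x‖ ^ r :=
    fun x ↦ rpow_nonneg (norm_nonneg _) _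
  intro hint
  have hfin := hint.2
  rw [HasFiniteIntegral, lintegral_enorm_of_nonneg fun x ↦ hnn x] at hfin
  set μ' := (volume : Measure (EuclideanSpace ℝ (Fin d))).restrict (Metric.ball 0 1) with hμ'
  rw [lintegral_eq_lintegral_meas_le μ' (Eventually.of_forall hnn) hmeas.aemeasurable] at hfin
  set B := volume (Metric.ball (0 : EuclideanSpace ℝ (Fin d)) 1) with hB
  have hB0 : B ≠ 0 := (Metric.measure_ball_pos _ _ one_pos).ne'
  have hp : -1 ≤ r⁻¹ * d := by
    rw [inv_mul_eq_div, le_div_iff_of_neg h2]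
    nlinarith [d.cast_nonneg (α := ℝ)]
  -- lower bound the layer-cake integral
  have key : ∀ t ∈ Ioi (1 : ℝ),
      ENNReal.ofReal (t ^ (r⁻¹ * d)) * B ≤ μ' {a | t ≤ ‖a‖ ^ r} := by
    intro t ht
    have ht0 : (0 : ℝ) < t := lt_trans one_pos ht
    have hSm : MeasurableSet {a : EuclideanSpace ℝ (Fin d) | t ≤ ‖a‖ ^ r} :=
      hmeas measurableSet_Ici
    have : ENNReal.ofReal (t ^ (r⁻¹ * d)) * B
        = volume (Metric.closedBall (0 : EuclideanSpace ℝ (Fin d)) (t ^ r⁻¹) \ {0}) := by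
      rw [measure_diff_null (measure_singleton _),
        Measure.addHaar_closedBall _ _ (rpow_nonneg ht0.le _), hB]
      congr 2
      rw [← Real.rpow_natCast (t ^ r⁻¹), ← Real.rpow_mul ht0.le, finrank_euclideanSpace_fin]
    rw [this, hμ', Measure.restrict_apply hSm]
    exact measure_mono (riesz_subset' h2 ht)
  have hlow : (∫⁻ t in Ioi (1:ℝ), ENNReal.ofReal (t ^ (r⁻¹ * d)) * B)
      ≤ ∫⁻ t in Ioi 0, μ' {a | t ≤ ‖a‖ ^ r} := by
    refine le_trans (setLIntegral_mono' measurableSet_Ioi key) (lintegral_mono_set ?_)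
    exact Ioi_subset_Ioi zero_le_one
  have hI : (∫⁻ t in Ioi (1:ℝ), ENNReal.ofReal (t ^ (r⁻¹ * d))) = ∞ := by
    by_contra hne
    have hILT : IntegrableOn (fun t : ℝ ↦ t ^ (r⁻¹ * d)) (Ioi (1:ℝ)) := by
      constructor
      · fun_prop
      · rw [HasFiniteIntegral]
        have : ∀ᵐ t ∂(volume.restrict (Ioi (1:ℝ))),
            ‖t ^ (r⁻¹ * d)‖ₑ = ENNReal.ofReal (t ^ (r⁻¹ * d)) := by
          rw [ae_restrict_iff' measurableSet_Ioi]
          refine Eventually.of_forall fun t ht ↦ ?_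
          rw [← Real.enorm_eq_ofReal (rpow_nonneg (le_of_lt (lt_trans one_pos ht)) _)]
        rw [lintegral_congr_ae this]
        exact lt_top_iff_ne_top.2 hne
    rw [integrableOn_Ioi_rpow_iff one_pos] at hILT
    linarith
  have htop : (∫⁻ t in Ioi (1:ℝ), ENNReal.ofReal (t ^ (r⁻¹ * d)) * B) = ∞ := by
    rw [lintegral_mul_const' _ _ measure_ball_lt_top.ne, hI, ENNReal.top_mul hB0]
  rw [htop] at hlow
  exact lt_irrefl _ (lt_of_le_of_lt hlow hfin)

lemma riesz_meas {d : ℕ} (v : EuclideanSpace ℝ (Fin d)) (p q : ℝ) :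
    Measurable (fun z : EuclideanSpace ℝ (Fin d) ↦ ‖v - z‖ ^ p * ‖z‖ ^ q) := by
  fun_prop

lemma riesz_L4 {d : ℕ} (hd : 1 ≤ d) {a b : ℝ} (ha : 0 < a) (hb : 0 < b) (hab : a + b < d)
    (v : EuclideanSpace ℝ (Fin d)) (hv : ‖v‖ = 1) :
    Integrable (fun z : EuclideanSpace ℝ (Fin d) ↦ ‖v - z‖ ^ (a - d) * ‖z‖ ^ (b - d)) := by
  have hd' : (1:ℝ) ≤ d := by exact_mod_cast hd
  have hmeas := riesz_meas v (a - d) (b - d)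
  set S1 := Metric.ball (0 : EuclideanSpace ℝ (Fin d)) 2⁻¹ with hS1
  set S2 := Metric.ball v 2⁻¹ with hS2
  rw [← integrableOn_univ, ← union_compl_self (S1 ∪ S2), union_assoc]
  refine IntegrableOn.union ?_ (IntegrableOn.union ?_ ?_)
  · -- on S1 : ‖v - z‖ ≥ 1/2
    have base : IntegrableOn (fun z : EuclideanSpace ℝ (Fin d) ↦ ‖z‖ ^ (b - d)) S1 :=
      (riesz_L1 hd (by linarith) (by linarith)).mono_set
        (Metric.ball_subset_ball (by norm_num))
    refine (base.const_mul ((2⁻¹ : ℝ) ^ (a - d))).mono'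
      hmeas.aestronglyMeasurable.restrict ?_
    rw [ae_restrict_iff' Metric.isOpen_ball.measurableSet]
    refine Eventually.of_forall fun z hz ↦ ?_
    rw [Metric.mem_ball, dist_zero_right] at hz
    have hvz : (2⁻¹ : ℝ) ≤ ‖v - z‖ := by
      have := norm_sub_norm_le v z
      linarith
    rw [Real.norm_eq_abs, abs_of_nonneg (by positivity)]
    exact mul_le_mul_of_nonneg_right
      (Real.rpow_le_rpow_of_nonpos (by norm_num) hvz (by linarith))
      (rpow_nonneg (norm_nonneg _) _)
  · -- on S2 : ‖z‖ ≥ 1/2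
    have base0 : IntegrableOn (fun z : EuclideanSpace ℝ (Fin d) ↦ ‖z‖ ^ (a - d)) S1 :=
      (riesz_L1 hd (by linarith) (by linarith)).mono_set
        (Metric.ball_subset_ball (by norm_num))
    have J : Integrable (S1.indicator fun u : EuclideanSpace ℝ (Fin d) ↦ ‖u‖ ^ (a - d)) :=
      (integrable_indicator_iff Metric.isOpen_ball.measurableSet).2 base0
    have J2 : Integrable (fun z : EuclideanSpace ℝ (Fin d) ↦
        (S1.indicator fun u : EuclideanSpace ℝ (Fin d) ↦ ‖u‖ ^ (a - d)) (v - z)) :=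
      (integrable_comp_sub_left _ v).2 J
    have Jeq : (fun z : EuclideanSpace ℝ (Fin d) ↦
        (S1.indicator fun u : EuclideanSpace ℝ (Fin d) ↦ ‖u‖ ^ (a - d)) (v - z))
        = S2.indicator fun z : EuclideanSpace ℝ (Fin d) ↦ ‖v - z‖ ^ (a - d) := by
      ext z
      have hmem : v - z ∈ S1 ↔ z ∈ S2 := by
        rw [hS1, hS2, Metric.mem_ball, Metric.mem_ball, dist_zero_right, dist_comm,
          dist_eq_norm]
      by_cases hz : z ∈ S2
      · rw [indicator_of_mem (hmem.2 hz), indicator_of_mem hz]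
      · rw [indicator_of_notMem (fun hc ↦ hz (hmem.1 hc)), indicator_of_notMem hz]
    rw [Jeq, integrable_indicator_iff Metric.isOpen_ball.measurableSet] at J2
    refine (J2.mul_const ((2⁻¹ : ℝ) ^ (b - d))).mono'
      hmeas.aestronglyMeasurable.restrict ?_
    rw [ae_restrict_iff' Metric.isOpen_ball.measurableSet]
    refine Eventually.of_forall fun z hz ↦ ?_
    rw [Metric.mem_ball, dist_eq_norm, ← norm_neg, neg_sub] at hz
    have hz' : (2⁻¹ : ℝ) ≤ ‖z‖ := by
      have := norm_sub_norm_le v z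
      have h2 : ‖v‖ - ‖z‖ ≤ ‖v - z‖ := this
      rw [hv] at h2
      linarith
    rw [Real.norm_eq_abs, abs_of_nonneg (by positivity)]
    exact mul_le_mul_of_nonneg_left
      (Real.rpow_le_rpow_of_nonpos (by norm_num) hz' (by linarith))
      (rpow_nonneg (norm_nonneg _) _)
  · -- far region
    have base : IntegrableOn
        (fun z : EuclideanSpace ℝ (Fin d) ↦ ‖z‖ ^ (a - d + (b - d))) (S1 ∪ S2)ᶜ :=
      (riesz_L2 (by push_cast; linarith) (by norm_num : (0:ℝ) < 2⁻¹)).mono_set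
        (compl_subset_compl.2 subset_union_left)
    refine (base.const_mul ((3⁻¹ : ℝ) ^ (a - d))).mono'
      hmeas.aestronglyMeasurable.restrict ?_
    rw [ae_restrict_iff' (Metric.isOpen_ball.union Metric.isOpen_ball).measurableSet.compl]
    refine Eventually.of_forall fun z hz ↦ ?_
    rw [mem_compl_iff, mem_union, not_or] at hz
    obtain ⟨hz1, hz2⟩ := hz
    rw [Metric.mem_ball, dist_zero_right, not_lt] at hz1
    rw [Metric.mem_ball, dist_eq_norm, ← norm_neg, neg_sub, not_lt] at hz2
    have hz0 : (0:ℝ) < ‖z‖ := by linarith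
    have hkey : 3⁻¹ * ‖z‖ ≤ ‖v - z‖ := by
      have h2' : ‖z‖ - 1 ≤ ‖v - z‖ := by
        have := norm_sub_norm_le z v
        rw [norm_sub_rev z v, hv] at this
        linarith
      rcases le_total ‖z‖ (3/2) with hc | hc
      · linarith
      · linarith
    rw [Real.norm_eq_abs, abs_of_nonneg (by positivity)]
    calc ‖v - z‖ ^ (a - d) * ‖z‖ ^ (b - d)
        ≤ (3⁻¹ * ‖z‖) ^ (a - d) * ‖z‖ ^ (b - d) :=
          mul_le_mul_of_nonneg_right
            (Real.rpow_le_rpow_of_nonpos (by positivity) hkey (by linarith))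
            (rpow_nonneg (norm_nonneg _) _)
      _ = (3⁻¹ : ℝ) ^ (a - d) * ‖z‖ ^ (a - d + (b - d)) := by
          rw [Real.mul_rpow (by norm_num) (norm_nonneg _), Real.rpow_add hz0, mul_assoc]

theorem stmt_11 (d : ℕ) (hd : 1 ≤ d) (a b : ℝ) (ha : 0 < a) (hb : 0 < b)
    (hab : a + b < d) :
    ∃ c > (0 : ℝ), ∀ x y : EuclideanSpace ℝ (Fin d),
      ∫ z : EuclideanSpace ℝ (Fin d),
          ‖x - z‖ ^ (a - d) * ‖z - y‖ ^ (b - d)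
        = c * ‖x - y‖ ^ (a + b - d) := by
  have hd' : (1:ℝ) ≤ d := by exact_mod_cast hd
  set v₀ : EuclideanSpace ℝ (Fin d) := EuclideanSpace.single (⟨0, hd⟩ : Fin d) (1:ℝ)
    with hv₀def
  have hv₀ : ‖v₀‖ = 1 := by rw [hv₀def, EuclideanSpace.norm_single]; norm_num
  have hv₀0 : v₀ ≠ 0 := by
    intro hc
    rw [hc, norm_zero] at hv₀
    norm_num at hv₀
  haveI : Nontrivial (EuclideanSpace ℝ (Fin d)) := nontrivial_of_ne v₀ 0 hv₀0
  set c : ℝ := ∫ z : EuclideanSpace ℝ (Fin d), ‖v₀ - z‖ ^ (a - d) * ‖z‖ ^ (b - d) with hcdef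
  have hint := riesz_L4 hd ha hb hab v₀ hv₀
  have hcpos : 0 < c := by
    rw [hcdef, integral_pos_iff_support_of_nonneg (fun z ↦ by positivity) hint]
    have hpair : volume ({0, v₀} : Set (EuclideanSpace ℝ (Fin d))) = 0 :=
      Set.Countable.measure_zero (by simp) _
    have hsub : Metric.ball (0 : EuclideanSpace ℝ (Fin d)) 1 \ {0, v₀} ⊆
        Function.support fun z ↦ ‖v₀ - z‖ ^ (a - (d:ℝ)) * ‖z‖ ^ (b - (d:ℝ)) := by
      rintro z ⟨_, hz2⟩
      rw [mem_insert_iff, mem_singleton_iff, not_or] at hz2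
      obtain ⟨hz0, hzv⟩ := hz2
      have h1 : 0 < ‖v₀ - z‖ := norm_pos_iff.2 (sub_ne_zero.2 (Ne.symm hzv))
      have h2 : 0 < ‖z‖ := norm_pos_iff.2 hz0
      exact ne_of_gt (mul_pos (rpow_pos_of_pos h1 _) (rpow_pos_of_pos h2 _))
    calc (0:ℝ≥0∞) < volume (Metric.ball (0 : EuclideanSpace ℝ (Fin d)) 1 \ {0, v₀}) := by
          rw [measure_diff_null hpair]
          exact Metric.measure_ball_pos _ _ one_pos
      _ ≤ _ := measure_mono hsub
  refine ⟨c, hcpos, fun x y ↦ ?_⟩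
  by_cases hxy : x = y
  · subst hxy
    rw [sub_self, norm_zero, Real.zero_rpow (by intro hc; rw [sub_eq_zero] at hc; linarith
        [hc ▸ hab]), mul_zero]
    refine integral_undef fun hI ↦ ?_
    have hI2 := hI.comp_add_left x
    have hI3 : Integrable (fun t : EuclideanSpace ℝ (Fin d) ↦ ‖t‖ ^ (a - (d:ℝ)) * ‖t‖ ^ (b - (d:ℝ))) := by
      refine hI2.congr (Eventually.of_forall fun t ↦ ?_)
      simp only [sub_add_cancel_left, add_sub_cancel_left, norm_neg]
    have h0 : ∀ᵐ t : EuclideanSpace ℝ (Fin d) ∂volume, t ≠ 0 := by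
      rw [ae_iff]
      simpa using measure_singleton (0 : EuclideanSpace ℝ (Fin d))
    have hI4 : IntegrableOn (fun t : EuclideanSpace ℝ (Fin d) ↦ ‖t‖ ^ (a - (d:ℝ) + (b - (d:ℝ))))
        (Metric.ball 0 1) := by
      refine (hI3.integrableOn).congr_fun_ae ?_
      filter_upwards [ae_restrict_of_ae h0] with t ht
      rw [Real.rpow_add (norm_pos_iff.2 ht)]
    exact riesz_L3 hd (by linarith) hI4
  · set w : EuclideanSpace ℝ (Fin d) := x - y with hwdef
    have hw : w ≠ 0 := sub_ne_zero.2 hxy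
    have hR : 0 < ‖w‖ := norm_pos_iff.2 hw
    set v : EuclideanSpace ℝ (Fin d) := ‖w‖⁻¹ • w with hvdef
    have hv : ‖v‖ = 1 := by
      rw [hvdef, norm_smul, norm_inv, norm_norm, inv_mul_cancel₀ hR.ne']
    have hw_eq : w = ‖w‖ • v := by
      rw [hvdef, smul_smul, mul_inv_cancel₀ hR.ne', one_smul]
    have stepA : (∫ z : EuclideanSpace ℝ (Fin d), ‖x - z‖ ^ (a - (d:ℝ)) * ‖z - y‖ ^ (b - (d:ℝ)))
        = ∫ z : EuclideanSpace ℝ (Fin d), ‖w - z‖ ^ (a - (d:ℝ)) * ‖z‖ ^ (b - (d:ℝ)) := by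
      rw [← integral_add_right_eq_self
        (fun z : EuclideanSpace ℝ (Fin d) ↦ ‖x - z‖ ^ (a - (d:ℝ)) * ‖z - y‖ ^ (b - (d:ℝ))) y]
      refine integral_congr_ae (Eventually.of_forall fun z ↦ ?_)
      have hxz : x - (z + y) = w - z := by rw [hwdef]; abel
      simp only [add_sub_cancel_right, hxz]
    have stepB : (∫ z : EuclideanSpace ℝ (Fin d), ‖w - z‖ ^ (a - (d:ℝ)) * ‖z‖ ^ (b - (d:ℝ)))
        = ‖w‖ ^ (a + b - (d:ℝ)) *
          ∫ z : EuclideanSpace ℝ (Fin d), ‖v - z‖ ^ (a - (d:ℝ)) * ‖z‖ ^ (b - (d:ℝ)) := by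
      have hcs := MeasureTheory.Measure.integral_comp_smul_of_nonneg
        (volume : Measure (EuclideanSpace ℝ (Fin d)))
        (fun z : EuclideanSpace ℝ (Fin d) ↦ ‖w - z‖ ^ (a - (d:ℝ)) * ‖z‖ ^ (b - (d:ℝ)))
        ‖w‖ (hR := hR.le)
      have hpt : (∫ z : EuclideanSpace ℝ (Fin d),
          ‖w - ‖w‖ • z‖ ^ (a - (d:ℝ)) * ‖(‖w‖ • z)‖ ^ (b - (d:ℝ)))
          = (‖w‖ ^ (a - (d:ℝ)) * ‖w‖ ^ (b - (d:ℝ))) *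
            ∫ z : EuclideanSpace ℝ (Fin d), ‖v - z‖ ^ (a - (d:ℝ)) * ‖z‖ ^ (b - (d:ℝ)) := by
        rw [← integral_const_mul]
        refine integral_congr_ae (Eventually.of_forall fun z ↦ ?_)
        simp only
        have h1 : w - ‖w‖ • z = ‖w‖ • (v - z) := by rw [smul_sub, ← hw_eq]
        rw [h1, norm_smul, norm_smul, Real.norm_eq_abs, abs_of_pos hR,
          Real.mul_rpow hR.le (norm_nonneg _), Real.mul_rpow hR.le (norm_nonneg _)]
        ring
      rw [hpt, smul_eq_mul] at hcs
      have hn0 : (‖w‖ : ℝ) ^ Module.finrank ℝ (EuclideanSpace ℝ (Fin d)) ≠ 0 := by positivity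
      rw [eq_comm, inv_mul_eq_iff_eq_mul₀ hn0] at hcs
      rw [hcs, finrank_euclideanSpace_fin]
      have hKey : ‖w‖ ^ (a - (d:ℝ)) * ‖w‖ ^ (b - (d:ℝ)) * ‖w‖ ^ (d:ℕ) = ‖w‖ ^ (a + b - (d:ℝ)) := by
        rw [← Real.rpow_natCast ‖w‖ d, ← Real.rpow_add hR, ← Real.rpow_add hR]
        congr 1
        push_cast
        ring
      rw [← hKey]
      ring
    have hv0v : ‖v₀‖ = ‖v‖ := by rw [hv₀, hv]
    set e := (Submodule.reflection (ℝ ∙ (v₀ - v))ᗮ) with hedef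
    have he : e v₀ = v := Submodule.reflection_sub hv0v
    have hmp : MeasurePreserving e := e.measurePreserving
    have stepC : (∫ z : EuclideanSpace ℝ (Fin d), ‖v - z‖ ^ (a - (d:ℝ)) * ‖z‖ ^ (b - (d:ℝ)))
        = c := by
      rw [hcdef,
        ← hmp.integral_comp e.toHomeomorph.measurableEmbedding
          (fun z : EuclideanSpace ℝ (Fin d) ↦ ‖v - z‖ ^ (a - (d:ℝ)) * ‖z‖ ^ (b - (d:ℝ)))]
      refine integral_congr_ae (Eventually.of_forall fun z ↦ ?_)
      simp only
      rw [← he, ← map_sub, e.norm_map, e.norm_map]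
    rw [stepA, stepB, stepC, mul_comm]
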